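/- Let G be a directed graph on {1,…,n} with parameters ε, δ, θ in the legal range. If σ ∈ FP(G,ε,δ) and σ ⊆ τ ⊆ {1,…,n}, then σ ∈ FP(G|_τ, ε, δ); that is, a fixed point support of the full CTLN is also a fixed point support of the CTLN of any induced subgraph containing it. In particular, σ ∈ FP(G,ε,δ) implies σ ∈ FP(G|_σ, ε, δ). -/

import Mathlib

open scoped Classical

noncomputable section

/-- The parameters ε, δ, θ are in the legal range. -/
def legalRange (ε δ θ : ℝ) : Prop :=
  0 < δ ∧ 0 < θ ∧ 0 < ε ∧ ε < δ / (δ + 1)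

/-- The CTLN matrix of a directed graph `E` (where `E j i` means there is an edge j → i):
`W i i = 0`, `W i j = -1 + ε` if `j → i`, and `W i j = -1 - δ` otherwise. -/
def ctlnW {V : Type*} (E : V → V → Prop) (ε δ : ℝ) : Matrix V V ℝ :=
  fun i j => if i = j then 0 else if E j i then -1 + ε else -1 - δ

/-- A fixed point of the CTLN: a nonnegative vector with
`x i = max 0 (∑ j, W i j * x j + θ)` for all `i`. -/
def isFixedPoint {V : Type*} [Fintype V] (W : Matrix V V ℝ) (θ : ℝ) (x : V → ℝ) : Prop :=
  (∀ i, 0 ≤ x i) ∧ ∀ i, x i = max 0 ((∑ j, W i j * x j) + θ)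

/-- The support of a vector: the set of indices where it is positive. -/
def support {V : Type*} (x : V → ℝ) : Set V := {i | 0 < x i}

/-- The set of fixed point supports of the CTLN associated to the graph `E`. -/
def FP {V : Type*} [Fintype V] (E : V → V → Prop) (ε δ θ : ℝ) : Set (Set V) :=
  {σ | ∃ x : V → ℝ, isFixedPoint (ctlnW E ε δ) θ x ∧ support x = σ}

/-- The induced subgraph of `E` on the vertex subset `τ`. -/
def restrict {V : Type*} (E : V → V → Prop) (τ : Set V) : ↥τ → ↥τ → Prop :=
  fun i j => E (i : V) (j : V)

/-- The principal submatrix `W_σ` with rows and columns restricted to `σ`. -/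
def subMatrix {V : Type*} (W : Matrix V V ℝ) (σ : Set V) : Matrix ↥σ ↥σ ℝ :=
  fun i j => W (i : V) (j : V)

end

/-- A fixed point support of the full CTLN is also a fixed point support of the
CTLN of any induced subgraph containing it; in particular of the induced subgraph on itself. -/
lemma restrict_mem_FP {n : ℕ} (E : Fin n → Fin n → Prop) (ε δ θ : ℝ)
    (σ τ : Set (Fin n)) (hσ : σ ∈ FP E ε δ θ) (hστ : σ ⊆ τ) :
    {i : ↥τ | (i : Fin n) ∈ σ} ∈ FP (restrict E τ) ε δ θ := by
  classical
  obtain ⟨x, ⟨hpos, hfix⟩, hsupp⟩ := hσ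
  have hzero : ∀ j : Fin n, j ∉ τ → x j = 0 := by
    intro j hj
    by_contra h
    exact hj (hστ (hsupp ▸ lt_of_le_of_ne (hpos j) (Ne.symm h)))
  have hsum : ∀ i : Fin n,
      (∑ j : ↥τ, ctlnW E ε δ i (j : Fin n) * x (j : Fin n)) =
      ∑ j : Fin n, ctlnW E ε δ i j * x j := by
    intro i
    rw [← Finset.sum_subtype τ.toFinset (by simp) (fun j => ctlnW E ε δ i j * x j)]
    exact Finset.sum_subset (Finset.subset_univ _)
      (fun j _ hj => by rw [hzero j (by simpa using hj), mul_zero])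
  have hW : ∀ i j : ↥τ, ctlnW (restrict E τ) ε δ i j = ctlnW E ε δ (i : Fin n) (j : Fin n) := by
    intro i j
    simp [ctlnW, restrict, Subtype.ext_iff]
    congr
  refine ⟨fun i => x (i : Fin n), ⟨fun i => hpos _, fun i => ?_⟩, ?_⟩
  · calc x (i : Fin n) = max 0 ((∑ j : Fin n, ctlnW E ε δ i j * x j) + θ) := hfix i
      _ = max 0 ((∑ j : ↥τ, ctlnW (restrict E τ) ε δ i j * x (j : Fin n)) + θ) := by
          rw [← hsum i]; simp_rw [hW]
  · ext i
    simp [support, ← hsupp]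

theorem statement_3 {n : ℕ} (E : Fin n → Fin n → Prop)
    (h_irrefl : ∀ i, ¬ E i i)
    (ε δ θ : ℝ) (hpar : legalRange ε δ θ)
    (σ τ : Set (Fin n)) (hσ : σ ∈ FP E ε δ θ) (hστ : σ ⊆ τ) :
    {i : ↥τ | (i : Fin n) ∈ σ} ∈ FP (restrict E τ) ε δ θ ∧
    Set.univ ∈ FP (restrict E σ) ε δ θ := by
  refine ⟨restrict_mem_FP E ε δ θ σ τ hσ hστ, ?_⟩
  have h := restrict_mem_FP E ε δ θ σ σ hσ (subset_refl σ)
  have : {i : ↥σ | (i : Fin n) ∈ σ} = (Set.univ : Set ↥σ) := by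
    ext i; simp [i.2]
  rwa [this] at h
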